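/- Let K be a compact metrizable subset of a real locally convex Hausdorff space E (or more generally of any topological vector space). Then there exists a continuous map g : [0,1] → E with g([0,1]) contained in the closed convex hull of K and K ⊆ g([0,1]). -/

import Mathlib

open Set Filter Topology TopologicalSpace

lemma smul_small {E : Type*} [AddCommGroup E] [Module ℝ E] [TopologicalSpace E]
    [IsTopologicalAddGroup E] [ContinuousSMul ℝ E]
    {D : Set E} (hD : IsCompact D) {W : Set E} (hW : W ∈ 𝓝 (0:E)) :
    ∃ ε > 0, ∀ c : ℝ, |c| < ε → ∀ x ∈ D, c • x ∈ W := by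
  have hcont : Continuous fun p : ℝ × E => p.1 • p.2 := continuous_smul
  have hsub : ({(0:ℝ)} : Set ℝ) ×ˢ D ⊆ (fun p : ℝ × E => p.1 • p.2) ⁻¹' interior W := by
    rintro ⟨c, x⟩ ⟨hc, hx⟩
    simp only [mem_singleton_iff] at hc
    simp [hc, mem_interior_iff_mem_nhds.2 hW]
  obtain ⟨U, V, hU, hV, h0U, hDV, hUV⟩ :=
    generalized_tube_lemma isCompact_singleton hD
      (isOpen_interior.preimage hcont) hsub
  obtain ⟨ε, hε, hball⟩ := Metric.isOpen_iff.1 hU 0 (h0U rfl)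
  refine ⟨ε, hε, fun c hc x hx => ?_⟩
  have : (c, x) ∈ U ×ˢ V := ⟨hball (by simpa [Real.dist_eq] using hc), hDV hx⟩
  exact interior_subset (hUV this)

lemma interp_ext {E : Type*} [AddCommGroup E] [Module ℝ E] [TopologicalSpace E]
    [IsTopologicalAddGroup E] [ContinuousSMul ℝ E]
    {C : Set ℝ} (hC : IsCompact C) (hCne : C.Nonempty) {f : ℝ → E}
    (hf : ContinuousOn f C) :
    ∃ G : ℝ → E, Continuous G ∧ Set.EqOn G f C ∧ Set.range G ⊆ convexHull ℝ (f '' C) := by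
  classical
  set a0 : ℝ := sInf C with ha0def
  set b0 : ℝ := sSup C with hb0def
  have ha0 : a0 ∈ C := hC.sInf_mem hCne
  have hb0 : b0 ∈ C := hC.sSup_mem hCne
  have hbddA : BddAbove C := hC.bddAbove
  have hbddB : BddBelow C := hC.bddBelow
  have hle : ∀ u ∈ C, a0 ≤ u ∧ u ≤ b0 := fun u hu => ⟨csInf_le hbddB hu, le_csSup hbddA hu⟩
  set p : ℝ → ℝ := fun t => sSup (C ∩ Iic t) with hpdef
  set q : ℝ → ℝ := fun t => sInf (C ∩ Ici t) with hqdef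
  have hPcomp : ∀ t : ℝ, IsCompact (C ∩ Iic t) := fun t => hC.inter_right isClosed_Iic
  have hQcomp : ∀ t : ℝ, IsCompact (C ∩ Ici t) := fun t => hC.inter_right isClosed_Ici
  have hpmem : ∀ t, a0 ≤ t → p t ∈ C ∧ p t ≤ t := by
    intro t ht
    have h1 := (hPcomp t).sSup_mem ⟨a0, ha0, ht⟩
    exact ⟨h1.1, h1.2⟩
  have hqmem : ∀ t, t ≤ b0 → q t ∈ C ∧ t ≤ q t := by
    intro t ht
    have h1 := (hQcomp t).sInf_mem ⟨b0, hb0, ht⟩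
    exact ⟨h1.1, h1.2⟩
  have hple : ∀ t, ∀ u ∈ C, u ≤ t → u ≤ p t := fun t u hu hut =>
    le_csSup (hPcomp t).bddAbove ⟨hu, hut⟩
  have hqle : ∀ t, ∀ u ∈ C, t ≤ u → q t ≤ u := fun t u hu hut =>
    csInf_le (hQcomp t).bddBelow ⟨hu, hut⟩
  set G : ℝ → E := fun t =>
    if t ∈ C then f t
    else if t ≤ a0 then f a0
    else if b0 ≤ t then f b0
    else f (p t) + ((t - p t) / (q t - p t)) • (f (q t) - f (p t)) with hGdef
  have hGC : ∀ t ∈ C, G t = f t := fun t ht => by simp [hGdef, ht]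
  have hgap : ∀ t, t ∉ C → a0 < t → t < b0 →
      p t ∈ C ∧ q t ∈ C ∧ p t < t ∧ t < q t := by
    intro t htC hta htb
    obtain ⟨h1, h2⟩ := hpmem t hta.le
    obtain ⟨h3, h4⟩ := hqmem t htb.le
    refine ⟨h1, h3, lt_of_le_of_ne h2 ?_, lt_of_le_of_ne h4 ?_⟩
    · intro h; exact htC (h ▸ h1)
    · intro h; exact htC (h ▸ h3)
  have hgap2 : ∀ t, ∀ u ∈ C, u ≤ p t ∨ q t ≤ u := by
    intro t u hu
    rcases le_or_gt u t with h | h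
    · exact Or.inl (hple t u hu h)
    · exact Or.inr (hqle t u hu h.le)
  have hGgap : ∀ t, t ∉ C → a0 < t → t < b0 → ∀ t' ∈ Ioo (p t) (q t),
      G t' = f (p t) + ((t' - p t) / (q t - p t)) • (f (q t) - f (p t)) := by
    intro t htC hta htb t' ht'
    obtain ⟨hpC, hqC, hpt, htq⟩ := hgap t htC hta htb
    have ht'C : t' ∉ C := by
      intro h
      rcases hgap2 t t' h with h1 | h1
      · exact absurd ht'.1 (not_lt.2 h1)
      · exact absurd ht'.2 (not_lt.2 h1)
    have ha0p : a0 ≤ p t := (hle _ hpC).1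
    have hqb0 : q t ≤ b0 := (hle _ hqC).2
    have hta' : a0 < t' := lt_of_le_of_lt ha0p ht'.1
    have htb' : t' < b0 := lt_of_lt_of_le ht'.2 hqb0
    have hpp : p t' = p t := by
      apply le_antisymm
      · obtain ⟨hmem, hlep⟩ := hpmem t' hta'.le
        rcases hgap2 t _ hmem with h1 | h1
        · exact h1
        · exact absurd (lt_of_le_of_lt hlep ht'.2) (not_lt.2 h1)
      · exact hple t' _ hpC ht'.1.le
    have hqq : q t' = q t := by
      apply le_antisymm
      · exact hqle t' _ hqC ht'.2.le
      · obtain ⟨hmem, hleq⟩ := hqmem t' htb'.le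
        rcases hgap2 t _ hmem with h1 | h1
        · exact absurd (hleq.trans h1) (not_le.2 ht'.1)
        · exact h1
    simp only [hGdef, if_neg ht'C, if_neg (not_le.2 hta'), if_neg (not_le.2 htb'), hpp, hqq]
  -- range is in the convex hull
  have hhull : ∀ t, G t ∈ convexHull ℝ (f '' C) := by
    intro t
    have hmemf : ∀ u ∈ C, f u ∈ convexHull ℝ (f '' C) := fun u hu =>
      subset_convexHull ℝ _ (mem_image_of_mem f hu)
    by_cases htC : t ∈ C
    · rw [hGC t htC]; exact hmemf t htC
    by_cases hta : t ≤ a0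
    · simp only [hGdef, if_neg htC, if_pos hta]; exact hmemf _ ha0
    by_cases htb : b0 ≤ t
    · simp only [hGdef, if_neg htC, if_pos htb, if_neg hta]; exact hmemf _ hb0
    push_neg at hta htb
    obtain ⟨hpC, hqC, hpt, htq⟩ := hgap t htC hta htb
    have hba : (0:ℝ) < q t - p t := by linarith
    simp only [hGdef, if_neg htC, if_neg (not_le.2 hta), if_neg (not_le.2 htb)]
    exact (convex_convexHull ℝ _).add_smul_sub_mem (hmemf _ hpC) (hmemf _ hqC)
      ⟨div_nonneg (by linarith) hba.le, (div_le_one hba).2 (by linarith)⟩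
  -- continuity
  have hGcont : Continuous G := by
    rw [continuous_iff_continuousAt]
    intro c
    by_cases hc : c ∈ C
    · -- main case: continuity at a point of C
      rw [ContinuousAt, Filter.tendsto_def]
      intro V hV
      rw [hGC c hc] at hV
      have hVmem : (fun w : E => f c + w) ⁻¹' V ∈ 𝓝 (0:E) := by
        have ht : Tendsto (fun w : E => f c + w) (𝓝 0) (𝓝 (f c)) := by
          simpa only [add_zero] using (show
            Continuous fun w : E => f c + w from continuous_const.add continuous_id).tendsto (0:E)
        exact ht hV
      obtain ⟨W1, hW1, hW1add⟩ := exists_nhds_zero_half hVmem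
      obtain ⟨W, ⟨hW, hWbal⟩, hWsub⟩ := (nhds_basis_balanced ℝ E).mem_iff.1 hW1
      have h0W1 : (0:E) ∈ W1 := mem_of_mem_nhds hW1
      have hVin : ∀ w1 ∈ W1, ∀ w2 ∈ W1, f c + (w1 + w2) ∈ V := fun w1 h1 w2 h2 =>
        hW1add w1 h1 w2 h2
      have hM : IsCompact (f '' C) := hC.image_of_continuousOn hf
      have hD : IsCompact ((fun pr : E × E => pr.1 - pr.2) '' ((f '' C) ×ˢ (f '' C))) :=
        (hM.prod hM).image (continuous_fst.sub continuous_snd)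
      obtain ⟨ε0, hε0, hsmall⟩ := smul_small hD hW
      have hmemD : ∀ u v : ℝ, u ∈ C → v ∈ C →
          f u - f v ∈ ((fun pr : E × E => pr.1 - pr.2) '' ((f '' C) ×ˢ (f '' C))) :=
        fun u v hu hv => ⟨(f u, f v), ⟨mem_image_of_mem f hu, mem_image_of_mem f hv⟩, rfl⟩
      have hWc : (fun v : E => v - f c) ⁻¹' W ∈ 𝓝 (f c) := by
        have ht : Tendsto (fun v : E => v - f c) (𝓝 (f c)) (𝓝 0) := by
          simpa only [sub_self] using (show
            Continuous fun v : E => v - f c from continuous_id.sub continuous_const).tendsto (f c)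
        exact ht hW
      obtain ⟨δ, hδ, hδball⟩ := Metric.mem_nhdsWithin_iff.1 (hf c hc hWc)
      have hfW : ∀ u ∈ C, |u - c| < δ → f u - f c ∈ W := fun u hu hud =>
        hδball ⟨by simpa [Real.dist_eq] using hud, hu⟩
      set δ₂ := min (δ/2) (δ * ε0 / 4) with hδ₂def
      have hδ₂pos : 0 < δ₂ := lt_min (by linarith) (by positivity)
      have hδ₂δ : δ₂ ≤ δ/2 := min_le_left _ _
      have hδ₂ε : δ₂ ≤ δ * ε0 / 4 := min_le_right _ _
      refine mem_of_superset (Metric.ball_mem_nhds c hδ₂pos) ?_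
      intro t ht
      rw [Metric.mem_ball, Real.dist_eq, abs_lt] at ht
      show G t ∈ V
      have hone : ∀ u ∈ C, |u - c| < δ → f u ∈ V := by
        intro u hu hud
        have heq : f u = f c + ((f u - f c) + 0) := by module
        rw [heq]
        exact hVin _ (hWsub (hfW u hu hud)) _ h0W1
      have hac : a0 ≤ c := (hle c hc).1
      have hcb : c ≤ b0 := (hle c hc).2
      by_cases htC : t ∈ C
      · rw [hGC t htC]
        exact hone t htC (by rw [abs_lt]; constructor <;> linarith)
      by_cases hta : t ≤ a0
      · have hta' : t < a0 := lt_of_le_of_ne hta (fun h => htC (h ▸ ha0))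
        have hG : G t = f a0 := by simp [hGdef, htC, hta]
        rw [hG]
        exact hone a0 ha0 (by rw [abs_lt]; constructor <;> linarith)
      by_cases htb : b0 ≤ t
      · have htb' : b0 < t := lt_of_le_of_ne htb (fun h => htC (h ▸ hb0))
        push_neg at hta
        have hG : G t = f b0 := by simp [hGdef, htC, not_le.2 hta, htb]
        rw [hG]
        exact hone b0 hb0 (by rw [abs_lt]; constructor <;> linarith)
      push_neg at hta htb
      obtain ⟨hpC, hqC, hpt, htq⟩ := hgap t htC hta htb
      have hG : G t = f (p t) + ((t - p t) / (q t - p t)) • (f (q t) - f (p t)) := by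
        simp [hGdef, htC, not_le.2 hta, not_le.2 htb]
      set a := p t with hadef
      set b := q t with hbdef
      set θ := (t - a)/(b - a) with hθdef
      have hba : (0:ℝ) < b - a := by linarith
      have hθ0 : 0 ≤ θ := div_nonneg (by linarith) hba.le
      have hθ1 : θ ≤ 1 := (div_le_one hba).2 (by linarith)
      rcases lt_or_ge c t with hct | htc
      · -- c < t, so c ≤ a
        have hca : c ≤ a := hple t c hc hct.le
        have hfa : f a - f c ∈ W := hfW a hpC (by rw [abs_lt]; constructor <;> linarith)
        by_cases hbc : b - c < δ
        · have hfb : f b - f c ∈ W := hfW b hqC (by rw [abs_lt]; constructor <;> linarith)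
          rw [hG]
          have heq : f a + θ • (f b - f a)
              = f c + ((1 - θ) • (f a - f c) + θ • (f b - f c)) := by module
          rw [heq]
          refine hVin _ (hWsub (hWbal.smul_mem ?_ hfa)) _ (hWsub (hWbal.smul_mem ?_ hfb))
          · rw [Real.norm_eq_abs, abs_of_nonneg (by linarith)]; linarith
          · rw [Real.norm_eq_abs, abs_of_nonneg hθ0]; exact hθ1
        · push_neg at hbc
          have hθsmall : θ < ε0 := by
            rw [hθdef, div_lt_iff₀ hba]
            nlinarith [ht.2, hδ₂ε, hδ₂δ]
          rw [hG]
          have heq : f a + θ • (f b - f a) = f c + ((f a - f c) + θ • (f b - f a)) := by module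
          rw [heq]
          exact hVin _ (hWsub hfa) _
            (hWsub (hsmall θ (by rwa [abs_of_nonneg hθ0]) _ (hmemD b a hqC hpC)))
      · -- t < c, so b ≤ c
        have htc' : t < c := lt_of_le_of_ne htc (fun h => htC (h ▸ hc))
        have hbc : b ≤ c := hqle t c hc htc
        have hfb : f b - f c ∈ W := hfW b hqC (by rw [abs_lt]; constructor <;> linarith)
        by_cases hca : c - a < δ
        · have hfa : f a - f c ∈ W := hfW a hpC (by rw [abs_lt]; constructor <;> linarith)
          rw [hG]
          have heq : f a + θ • (f b - f a)
              = f c + ((1 - θ) • (f a - f c) + θ • (f b - f c)) := by module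
          rw [heq]
          refine hVin _ (hWsub (hWbal.smul_mem ?_ hfa)) _ (hWsub (hWbal.smul_mem ?_ hfb))
          · rw [Real.norm_eq_abs, abs_of_nonneg (by linarith)]; linarith
          · rw [Real.norm_eq_abs, abs_of_nonneg hθ0]; exact hθ1
        · push_neg at hca
          have h1θ : 1 - θ = (b - t)/(b - a) := by
            rw [hθdef]; field_simp; ring
          have hθsmall : 1 - θ < ε0 := by
            rw [h1θ, div_lt_iff₀ hba]
            nlinarith [ht.1, hδ₂ε, hδ₂δ]
          rw [hG]
          have heq : f a + θ • (f b - f a)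
              = f c + ((f b - f c) + (1 - θ) • (f a - f b)) := by module
          rw [heq]
          exact hVin _ (hWsub hfb) _
            (hWsub (hsmall (1 - θ) (by rwa [abs_of_nonneg (by linarith)]) _
              (hmemD a b hpC hqC)))
    · -- continuity at points outside C
      rcases lt_trichotomy c a0 with h | h | h
      · have hnb : Iio a0 ∈ 𝓝 c := Iio_mem_nhds h
        refine (continuousAt_const (y := f a0)).congr
          (Filter.eventuallyEq_of_mem hnb fun t' ht' => ?_)
        have ht'C : t' ∉ C := fun hmem => absurd (hle _ hmem).1 (not_le.2 ht')
        simp [hGdef, ht'C, (mem_Iio.1 ht').le]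
      · exact absurd (h ▸ ha0) hc
      · by_cases h2 : c < b0
        · obtain ⟨hpC, hqC, hpc, hcq⟩ := hgap c hc h h2
          have hnb : Ioo (p c) (q c) ∈ 𝓝 c := Ioo_mem_nhds hpc hcq
          have haff : Continuous fun t' : ℝ =>
              f (p c) + ((t' - p c) / (q c - p c)) • (f (q c) - f (p c)) :=
            continuous_const.add
              (((continuous_id.sub continuous_const).div_const _).smul continuous_const)
          exact haff.continuousAt.congr
            (Filter.eventuallyEq_of_mem hnb fun t' ht' => (hGgap c hc h h2 t' ht').symm)
        · have hb0c : b0 < c := lt_of_le_of_ne (not_lt.1 h2) (fun hh => hc (hh ▸ hb0))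
          have hnb : Ioi b0 ∈ 𝓝 c := Ioi_mem_nhds hb0c
          refine (continuousAt_const (y := f b0)).congr
            (Filter.eventuallyEq_of_mem hnb fun t' ht' => ?_)
          have ht'C : t' ∉ C := fun hmem => absurd (hle _ hmem).2 (not_le.2 ht')
          have hta0 : ¬ t' ≤ a0 := not_le.2 (lt_of_le_of_lt (hle _ hb0).1 (mem_Ioi.1 ht'))
          simp [hGdef, ht'C, hta0, (mem_Ioi.1 ht').le]
  exact ⟨G, hGcont, fun t ht => hGC t ht, by rintro v ⟨t, rfl⟩; exact hhull t⟩

lemma digit_embedding (k : ℕ → ℕ) (hk1 : ∀ n, 1 ≤ k n) :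
    ∃ e : ((n : ℕ) → Fin (k n)) → ℝ, Continuous e ∧ Function.Injective e := by
  classical
  have hkpos : ∀ n, (0:ℝ) < (k n : ℝ) := fun n => by exact_mod_cast hk1 n
  set w : ℕ → ℝ := fun n => ∏ m ∈ Finset.range n, (1 / (4 * (k m : ℝ))) with hwdef
  have hwpos : ∀ n, 0 < w n := fun n =>
    Finset.prod_pos fun m _ => div_pos one_pos (by nlinarith [hkpos m])
  have hwrec : ∀ n, w (n+1) = w n * (1/(4 * (k n : ℝ))) := fun n => Finset.prod_range_succ _ n
  have hwquarter : ∀ n, w (n+1) ≤ w n * (1/4) := by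
    intro n
    rw [hwrec n]
    apply mul_le_mul_of_nonneg_left _ (hwpos n).le
    have hkr : (1:ℝ) ≤ (k n : ℝ) := by exact_mod_cast hk1 n
    rw [div_le_div_iff₀ (by nlinarith) (by norm_num)]
    nlinarith
  have hwle : ∀ n, w n ≤ (1/4:ℝ)^n := by
    intro n
    induction n with
    | zero => simp [hwdef]
    | succ m ih =>
      calc w (m+1) ≤ w m * (1/4) := hwquarter m
        _ ≤ (1/4:ℝ)^m * (1/4) := by nlinarith
        _ = (1/4:ℝ)^(m+1) := by rw [pow_succ]
  have hwgeo : ∀ N j, w (N + j) ≤ w N * (1/4:ℝ)^j := by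
    intro N j
    induction j with
    | zero => simp
    | succ m ih =>
      have hp : (0:ℝ) < (1/4:ℝ)^m := by positivity
      calc w (N + (m+1)) = w ((N + m) + 1) := by ring_nf
        _ ≤ w (N + m) * (1/4) := hwquarter _
        _ ≤ (w N * (1/4:ℝ)^m) * (1/4) := by nlinarith [hwpos (N+m)]
        _ = w N * (1/4:ℝ)^(m+1) := by rw [pow_succ]; ring
  have hkw : ∀ n, (k n : ℝ) * w (n+1) = w n / 4 := by
    intro n
    rw [hwrec n]
    have h0 : (k n : ℝ) ≠ 0 := (hkpos n).ne'
    field_simp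
  have hxb : ∀ (z : (n : ℕ) → Fin (k n)) (n : ℕ),
      (0:ℝ) ≤ ((z n : ℕ):ℝ) ∧ ((z n : ℕ):ℝ) ≤ (k n : ℝ) :=
    fun z n => ⟨Nat.cast_nonneg _, by exact_mod_cast (z n).2.le⟩
  have hterm : ∀ (x : (n : ℕ) → Fin (k n)) (n : ℕ),
      |((x n : ℕ) : ℝ) * w (n+1)| ≤ (1/4:ℝ)^(n+1) := by
    intro x n
    rw [abs_of_nonneg (mul_nonneg (hxb x n).1 (hwpos _).le)]
    calc ((x n : ℕ) : ℝ) * w (n+1) ≤ (k n : ℝ) * w (n+1) :=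
          mul_le_mul_of_nonneg_right (hxb x n).2 (hwpos _).le
      _ = w n / 4 := hkw n
      _ ≤ (1/4:ℝ)^n / 4 := by nlinarith [hwle n]
      _ = (1/4:ℝ)^(n+1) := by rw [pow_succ]; ring
  have hgeo : Summable (fun n : ℕ => (1/4:ℝ)^(n+1)) := by
    simpa [pow_succ, mul_comm] using
      (summable_geometric_of_lt_one (by norm_num : (0:ℝ) ≤ 1/4) (by norm_num)).mul_left (1/4:ℝ)
  have hsummable : ∀ x : (n : ℕ) → Fin (k n), Summable (fun n => ((x n : ℕ) : ℝ) * w (n+1)) :=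
    fun x => Summable.of_norm_bounded hgeo (fun n => by
      rw [Real.norm_eq_abs]; exact hterm x n)
  refine ⟨fun x => ∑' n, ((x n : ℕ) : ℝ) * w (n+1), ?_, ?_⟩
  · apply continuous_tsum (u := fun n => (1/4:ℝ)^(n+1))
    · intro n
      have h1 : Continuous ((fun i : Fin (k n) => ((i : ℕ) : ℝ)) ∘
          (fun x : (n : ℕ) → Fin (k n) => x n)) :=
        Continuous.comp continuous_of_discreteTopology (continuous_apply n)
      exact (h1 : Continuous fun x : (n : ℕ) → Fin (k n) => ((x n : ℕ) : ℝ)).mul continuous_const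
    · exact hgeo
    · intro n x
      rw [Real.norm_eq_abs]; exact hterm x n
  · set e : ((n : ℕ) → Fin (k n)) → ℝ := fun x => ∑' n, ((x n : ℕ) : ℝ) * w (n+1) with hedef
    have hkey : ∀ (x y : (n : ℕ) → Fin (k n)) (N : ℕ),
        (∀ m < N, x m = y m) → ((y N : ℕ) < (x N : ℕ)) → e y < e x := by
      intro x y N hagree hlt
      have hsx := hsummable x
      have hsy := hsummable y
      set d : ℕ → ℝ := fun n => (((x n : ℕ) : ℝ) - ((y n : ℕ) : ℝ)) * w (n+1) with hddef
      have hd : Summable d := by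
        apply (hsx.sub hsy).congr
        intro n; simp only [hddef]; ring
      have hdiff : e x - e y = ∑ n ∈ Finset.range (N+1), d n + ∑' j, d (j + (N+1)) := by
        rw [Summable.sum_add_tsum_nat_add (N+1) hd, ← Summable.tsum_sub hsx hsy]
        congr 1; funext n; simp only [hddef]; ring
      have hhead : ∑ n ∈ Finset.range (N+1), d n = d N := by
        apply Finset.sum_eq_single_of_mem N (Finset.self_mem_range_succ N)
        intro m hm hmne
        have hmN : m < N := lt_of_le_of_ne (Nat.lt_succ_iff.1 (Finset.mem_range.1 hm)) hmne
        simp [hddef, hagree m hmN]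
      have hdN : w (N+1) ≤ d N := by
        have h1 : (1:ℝ) ≤ ((x N : ℕ) : ℝ) - ((y N : ℕ) : ℝ) := by
          have h2 : (y N : ℕ) + 1 ≤ (x N : ℕ) := hlt
          have h3 := (Nat.cast_le (α := ℝ)).2 h2
          push_cast at h3
          linarith
        calc w (N+1) = 1 * w (N+1) := (one_mul _).symm
          _ ≤ d N := mul_le_mul_of_nonneg_right h1 (hwpos _).le
      have htb : ∀ j : ℕ, |d (j + (N+1))| ≤ w (N+1) / 4 * (1/4:ℝ)^j := by
        intro j
        have h1 : |(((x (j+(N+1)) : ℕ) : ℝ) - ((y (j+(N+1)) : ℕ) : ℝ))| ≤ (k (j+(N+1)) : ℝ) := by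
          rw [abs_sub_le_iff]
          constructor <;> linarith [(hxb x (j+(N+1))).1, (hxb x (j+(N+1))).2,
            (hxb y (j+(N+1))).1, (hxb y (j+(N+1))).2]
        calc |d (j + (N+1))|
            = |(((x (j+(N+1)) : ℕ) : ℝ) - ((y (j+(N+1)) : ℕ) : ℝ))| * w (j+(N+1)+1) := by
              rw [hddef, abs_mul, abs_of_nonneg (hwpos _).le]
          _ ≤ (k (j+(N+1)) : ℝ) * w (j+(N+1)+1) := mul_le_mul_of_nonneg_right h1 (hwpos _).le
          _ = w (j+(N+1)) / 4 := hkw _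
          _ = w ((N+1)+j) / 4 := by rw [add_comm]
          _ ≤ w (N+1) * (1/4:ℝ)^j / 4 := by nlinarith [hwgeo (N+1) j]
          _ = w (N+1) / 4 * (1/4:ℝ)^j := by ring
      have hsum_tail : Summable fun j => d (j + (N+1)) := (summable_nat_add_iff (N+1)).2 hd
      have hsumg : Summable fun j : ℕ => w (N+1) / 4 * (1/4:ℝ)^j :=
        (summable_geometric_of_lt_one (by norm_num) (by norm_num)).mul_left _
      have habs : Summable fun j => |d (j + (N+1))| := hsum_tail.abs
      have htail : |∑' j, d (j + (N+1))| ≤ w (N+1) / 3 := by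
        calc |∑' j, d (j + (N+1))| ≤ ∑' j, |d (j + (N+1))| := by
              simpa [Real.norm_eq_abs] using norm_tsum_le_tsum_norm (f := fun j => d (j + (N+1)))
                (by simpa [Real.norm_eq_abs] using habs)
          _ ≤ ∑' j : ℕ, w (N+1) / 4 * (1/4:ℝ)^j := Summable.tsum_le_tsum htb habs hsumg
          _ = w (N+1) / 4 * (4/3) := by
              rw [tsum_mul_left, tsum_geometric_of_lt_one (by norm_num) (by norm_num)]
              norm_num
          _ ≤ w (N+1) / 3 := by nlinarith [hwpos (N+1)]
      have hfinal : 0 < e x - e y := by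
        rw [hdiff, hhead]
        linarith [htail, hdN, neg_abs_le (∑' j, d (j + (N+1))), hwpos (N+1)]
      linarith
    intro x y hxy
    by_contra hne'
    have hex : ∃ n, x n ≠ y n := by
      by_contra h; push_neg at h; exact hne' (funext h)
    set N := Nat.find hex with hNdef
    have hagree : ∀ m < N, x m = y m := fun m hm => not_not.1 (Nat.find_min hex hm)
    have hNs : x N ≠ y N := Nat.find_spec hex
    rcases Nat.lt_or_ge (y N : ℕ) (x N : ℕ) with h | h
    · exact absurd hxy (hkey x y N hagree h).ne'
    · rcases Nat.lt_or_ge (x N : ℕ) (y N : ℕ) with h2 | h2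
      · exact absurd hxy (hkey y x N (fun m hm => (hagree m hm).symm) h2).ne
      · exact hNs (Fin.ext (le_antisymm h h2))

lemma exists_compact_surjection {E : Type*} [TopologicalSpace E]
    (K : Set E) (hK : IsCompact K) (hKm : TopologicalSpace.MetrizableSpace K)
    (hne : K.Nonempty) :
    ∃ (C : Set ℝ) (f : ℝ → E), IsCompact C ∧ C.Nonempty ∧ ContinuousOn f C ∧ f '' C = K := by
  classical
  letI : MetricSpace K := TopologicalSpace.metrizableSpaceMetric K
  haveI hcs : CompactSpace K := isCompact_iff_compactSpace.mp hK
  haveI : Nonempty K := hne.to_subtype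
  haveI : SeparableSpace K := isSeparable_univ_iff.1 isCompact_univ.isSeparable
  obtain ⟨u, hu⟩ := TopologicalSpace.exists_dense_seq K
  -- finite nets at scale (1/2)^n
  have hnet : ∀ n : ℕ, ∃ N : ℕ, ∀ y : K, ∃ i, i < N ∧ dist y (u i) < (1/2:ℝ)^n := by
    intro n
    have hcover : (univ : Set K) ⊆ ⋃ i : ℕ, Metric.ball (u i) ((1/2:ℝ)^n) := by
      intro y _
      obtain ⟨i, hi⟩ := hu.exists_dist_lt y (show (0:ℝ) < (1/2:ℝ)^n by positivity)
      exact mem_iUnion.2 ⟨i, by simpa [Metric.mem_ball, one_div] using hi⟩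
    obtain ⟨t, ht⟩ := isCompact_univ.elim_finite_subcover _
      (fun i : ℕ => Metric.isOpen_ball) hcover
    refine ⟨t.sup id + 1, fun y => ?_⟩
    obtain ⟨i, hit, hy⟩ := mem_iUnion₂.1 (ht (mem_univ y))
    exact ⟨i, Nat.lt_succ_of_le (Finset.le_sup (f := id) hit),
      by simpa [Metric.mem_ball] using hy⟩
  set k : ℕ → ℕ := fun n => max (hnet n).choose 1 with hkdef
  have hk1 : ∀ n, 1 ≤ k n := fun n => le_max_right _ _
  have hknet : ∀ (n : ℕ) (y : K), ∃ i, i < k n ∧ dist y (u i) < (1/2:ℝ)^n := by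
    intro n y
    obtain ⟨i, hi, hd⟩ := (hnet n).choose_spec y
    exact ⟨i, lt_of_lt_of_le hi (le_max_left _ _), hd⟩
  obtain ⟨e, hecont, hinj⟩ := digit_embedding k hk1
  -- the scheme set
  set s : Set ((n : ℕ) → Fin (k n)) :=
    {x | (⋂ n, Metric.closedBall (u (x n : ℕ)) ((1/2:ℝ)^n)).Nonempty} with hsdef
  have hs_aux : ∀ y : K, ∃ x : (n : ℕ) → Fin (k n),
      ∀ n, y ∈ Metric.closedBall (u (x n : ℕ)) ((1/2:ℝ)^n) := by
    intro y
    choose i hi hd using fun n => hknet n y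
    exact ⟨fun n => ⟨i n, hi n⟩, fun n => Metric.mem_closedBall.2 (hd n).le⟩
  have hsne : s.Nonempty := by
    obtain ⟨x, hx⟩ := hs_aux (Classical.arbitrary K)
    exact ⟨x, ⟨_, mem_iInter.2 hx⟩⟩
  set g : s → K := fun x => x.2.some with hgdef
  have hg_mem : ∀ (x : s) (n : ℕ), g x ∈ Metric.closedBall (u (x.1 n : ℕ)) ((1/2:ℝ)^n) :=
    fun x n => mem_iInter.1 x.2.some_mem n
  have hgdist : ∀ (x y : s) (n : ℕ), x.1 n = y.1 n → dist (g x) (g y) ≤ 2 * (1/2:ℝ)^n := by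
    intro x y n hxy
    have h1 := Metric.mem_closedBall.1 (hg_mem x n)
    have h2 := Metric.mem_closedBall.1 (hg_mem y n)
    rw [hxy] at h1
    calc dist (g x) (g y) ≤ dist (g x) (u (y.1 n : ℕ)) + dist (u (y.1 n : ℕ)) (g y) :=
          dist_triangle _ _ _
      _ ≤ (1/2:ℝ)^n + (1/2:ℝ)^n := by
          rw [dist_comm (u (y.1 n : ℕ))]
          exact add_le_add h1 h2
      _ = 2 * (1/2:ℝ)^n := by ring
  have hgcont : Continuous g := by
    rw [continuous_iff_continuousAt]
    intro x
    rw [ContinuousAt, Metric.tendsto_nhds]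
    intro ε hε
    obtain ⟨n, hn⟩ : ∃ n : ℕ, (1/2:ℝ)^n < ε/2 :=
      exists_pow_lt_of_lt_one (by linarith) (by norm_num)
    have hopen : IsOpen {y : s | y.1 n = x.1 n} := by
      have hcy : Continuous fun y : s => y.1 n := (continuous_apply n).comp continuous_subtype_val
      exact (isOpen_discrete ({x.1 n} : Set (Fin (k n)))).preimage hcy
    filter_upwards [hopen.mem_nhds rfl] with y hy
    calc dist (g y) (g x) ≤ 2 * (1/2:ℝ)^n := hgdist y x n hy
      _ < ε := by linarith
  have hgsurj : Function.Surjective g := by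
    intro y
    obtain ⟨x, hx⟩ := hs_aux y
    have hxs : x ∈ s := ⟨y, mem_iInter.2 hx⟩
    refine ⟨⟨x, hxs⟩, ?_⟩
    have hd : ∀ n : ℕ, dist (g ⟨x, hxs⟩) y ≤ 2 * (1/2:ℝ)^n := by
      intro n
      have h1 := Metric.mem_closedBall.1 (hg_mem ⟨x, hxs⟩ n)
      have h2 := Metric.mem_closedBall.1 (hx n)
      calc dist (g ⟨x, hxs⟩) y ≤ dist (g ⟨x, hxs⟩) (u (x n : ℕ)) + dist (u (x n : ℕ)) y :=
            dist_triangle _ _ _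
        _ ≤ (1/2:ℝ)^n + (1/2:ℝ)^n := by
            rw [dist_comm (u (x n : ℕ))]
            exact add_le_add h1 h2
        _ = 2 * (1/2:ℝ)^n := by ring
    have hzero : dist (g ⟨x, hxs⟩) y ≤ 0 := by
      by_contra hpos
      push_neg at hpos
      obtain ⟨n, hn⟩ : ∃ n : ℕ, (1/2:ℝ)^n < dist (g ⟨x, hxs⟩) y / 2 :=
        exists_pow_lt_of_lt_one (by linarith) (by norm_num)
      linarith [hd n]
    exact dist_le_zero.1 hzero
  -- s is closed, hence compact
  have hsclosed : IsClosed s := by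
    rw [← isOpen_compl_iff, isOpen_iff_mem_nhds]
    intro x hx
    have hempty : (⋂ n, Metric.closedBall (u (x n : ℕ)) ((1/2:ℝ)^n)) = ∅ :=
      not_nonempty_iff_eq_empty.1 hx
    obtain ⟨t, ht⟩ := isCompact_univ.elim_finite_subfamily_closed
      (fun n : ℕ => Metric.closedBall (u (x n : ℕ)) ((1/2:ℝ)^n))
      (fun n => Metric.isClosed_closedBall) (by rw [univ_inter, hempty])
    have hopen2 : IsOpen {y : (n : ℕ) → Fin (k n) | ∀ n ∈ t, y n = x n} := by
      have heq : {y : (n : ℕ) → Fin (k n) | ∀ n ∈ t, y n = x n}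
          = ⋂ n ∈ t, {y : (n : ℕ) → Fin (k n) | y n = x n} := by
        ext y; simp
      rw [heq]
      refine isOpen_biInter_finset fun n _ => ?_
      show IsOpen ((fun y : (n : ℕ) → Fin (k n) => y n) ⁻¹' {x n})
      exact (isOpen_discrete ({x n} : Set (Fin (k n)))).preimage (continuous_apply n)
    rw [mem_nhds_iff]
    refine ⟨{y : (n : ℕ) → Fin (k n) | ∀ n ∈ t, y n = x n}, ?_, hopen2, fun n _ => rfl⟩
    intro y hy hys
    obtain ⟨z, hz⟩ := hys
    rw [mem_iInter] at hz
    have hmem : z ∈ (univ : Set K) ∩ ⋂ n ∈ t, Metric.closedBall (u (x n : ℕ)) ((1/2:ℝ)^n) := by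
      refine ⟨mem_univ z, mem_iInter₂.2 fun n hn => ?_⟩
      rw [← hy n hn]
      exact hz n
    rw [ht] at hmem
    exact hmem
  have hscomp : IsCompact s := hsclosed.isCompact
  haveI : CompactSpace s := isCompact_iff_compactSpace.mp hscomp
  haveI : Nonempty s := hsne.to_subtype
  -- transporting to ℝ
  set F : s → ℝ := fun x => e x.1 with hFdef
  have hFcont : Continuous F := hecont.comp continuous_subtype_val
  have hFinj : Function.Injective F := fun x y h => Subtype.ext (hinj h)
  set C : Set ℝ := Set.range F with hCdef
  have hCcomp : IsCompact C := isCompact_range hFcont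
  have hCne : C.Nonempty := range_nonempty _
  set y0 : E := hne.some with hy0def
  set f : ℝ → E := fun t => if h : ∃ x : s, F x = t then ((g h.choose : K) : E) else y0
    with hfdef
  have hfval : ∀ x : s, f (F x) = ((g x : K) : E) := by
    intro x
    have hex : ∃ x' : s, F x' = F x := ⟨x, rfl⟩
    simp only [hfdef, dif_pos hex]
    rw [hFinj hex.choose_spec]
  have hq : IsQuotientMap (rangeFactorization F) :=
    IsQuotientMap.of_surjective_continuous Set.rangeFactorization_surjective (hFcont.subtype_mk _)
  have hfc : ContinuousOn f C := by
    rw [continuousOn_iff_continuous_restrict, hq.continuous_iff]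
    have heq2 : C.domRestrict f ∘ rangeFactorization F = fun x : s => ((g x : K) : E) := by
      funext x
      simp only [Function.comp_apply, domRestrict_apply, rangeFactorization_coe]
      exact hfval x
    rw [heq2]
    exact continuous_subtype_val.comp hgcont
  have hfim : f '' C = K := by
    apply Subset.antisymm
    · rintro v ⟨t, ⟨x, rfl⟩, rfl⟩
      rw [hfval x]
      exact (g x).2
    · intro y hy
      obtain ⟨x, hx⟩ := hgsurj ⟨y, hy⟩
      refine ⟨F x, ⟨x, rfl⟩, ?_⟩
      rw [hfval x, hx]
  exact ⟨C, f, hCcomp, hCne, hfc, hfim⟩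

theorem stmt7 {E : Type*} [AddCommGroup E] [Module ℝ E] [TopologicalSpace E]
    [IsTopologicalAddGroup E] [ContinuousSMul ℝ E] [T2Space E]
    (K : Set E) (hK : IsCompact K) (hKm : TopologicalSpace.MetrizableSpace K)
    (hne : K.Nonempty) :
    ∃ g : Icc (0:ℝ) 1 → E, Continuous g ∧
      range g ⊆ closure (convexHull ℝ K) ∧ K ⊆ range g := by
  obtain ⟨C, f, hCcomp, hCne, hfc, hfim⟩ := exists_compact_surjection K hK hKm hne
  obtain ⟨G, hGcont, hGeq, hGrange⟩ := interp_ext hCcomp hCne hfc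
  set A : ℝ := sInf C with hAdef
  set B : ℝ := sSup C with hBdef
  have hA : A ∈ C := hCcomp.sInf_mem hCne
  have hB : B ∈ C := hCcomp.sSup_mem hCne
  have hAB : A ≤ B := csInf_le_csSup hCne hCcomp.bddBelow hCcomp.bddAbove
  set φ : Icc (0:ℝ) 1 → ℝ := fun t => (A - 1) + (t : ℝ) * ((B - A) + 2) with hφdef
  have hφcont : Continuous φ :=
    continuous_const.add (continuous_subtype_val.mul continuous_const)
  refine ⟨G ∘ φ, hGcont.comp hφcont, ?_, ?_⟩
  · rintro v ⟨t, rfl⟩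
    apply subset_closure
    have h1 := hGrange (mem_range_self (φ t))
    rwa [hfim] at h1
  · intro y hy
    rw [← hfim] at hy
    obtain ⟨t₀, ht₀C, rfl⟩ := hy
    have ht₀A : A ≤ t₀ := csInf_le hCcomp.bddBelow ht₀C
    have ht₀B : t₀ ≤ B := le_csSup hCcomp.bddAbove ht₀C
    have hden : (0:ℝ) < (B - A) + 2 := by linarith
    refine ⟨⟨(t₀ - (A - 1)) / ((B - A) + 2), ?_, ?_⟩, ?_⟩
    · apply div_nonneg (by linarith) hden.le
    · rw [div_le_one hden]; linarith
    · show G ((A - 1) + ((t₀ - (A - 1)) / ((B - A) + 2)) * ((B - A) + 2)) = f t₀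
      rw [div_mul_cancel₀ _ hden.ne']
      rw [show (A - 1) + (t₀ - (A - 1)) = t₀ by ring]
      exact hGeq ht₀C
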